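/- Fix integers 2 ≤ ℓ < k and m, and a constant c > ℓ/m. Let b := m(k-ℓ)+ℓ and suppose 2b divides n. If p < n^{-(k-ℓ)-c}, then with high probability the random k-graph H^{(k)}_{n,p} does not contain n/(2b) pairwise vertex-disjoint ℓ-paths each of length m. -/

import Mathlib

open MeasureTheory
open scoped ENNReal

/-- The Bernoulli measure on `Bool` with success probability `p` (truncated at 1). -/
noncomputable def bern (p : ℝ≥0∞) : Measure Bool :=
  (PMF.bernoulli (min p 1).toNNReal
    ((ENNReal.toNNReal_mono ENNReal.one_ne_top (min_le_right p 1)).trans_eq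
      ENNReal.toNNReal_one)).toMeasure

/-- The binomial random `k`-graph `H^{(k)}_{n,p}`: each `k`-subset of `Fin n` is
an edge independently with probability `p`. An outcome is a boolean labelling of
the `k`-subsets of `Fin n`. -/
noncomputable def randomHypergraph (n k : ℕ) (p : ℝ≥0∞) :
    Measure ({s : Finset (Fin n) // s.card = k} → Bool) :=
  Measure.pi fun _ => bern p

/-- The edge set of the outcome `ω` of the random `k`-graph. -/
def edgeSet {n k : ℕ} (ω : {s : Finset (Fin n) // s.card = k} → Bool) :
    Finset (Finset (Fin n)) :=
  (Finset.univ.filter (fun s : {s : Finset (Fin n) // s.card = k} => ω s = true)).image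
    Subtype.val

/-- The edges of an `ℓ`-path `k`-graph of length `m` with vertex sequence `v`. -/
def pathEdges {α : Type*} [DecidableEq α] (k ℓ m : ℕ) (v : ℕ → α) :
    Finset (Finset α) :=
  (Finset.range m).image (fun r => (Finset.range k).image (fun i => v (r * (k - ℓ) + i)))

/-- `(V, E)` is an `ℓ`-path `k`-graph of length `m`. -/
def IsEllPath {α : Type*} [DecidableEq α] (k ℓ m : ℕ) (V : Finset α)
    (E : Finset (Finset α)) : Prop :=
  ∃ v : ℕ → α, Set.InjOn v (Finset.range (m * (k - ℓ) + ℓ)) ∧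
    V = (Finset.range (m * (k - ℓ) + ℓ)).image v ∧ E = pathEdges k ℓ m v

/-- Fix `2 ≤ ℓ < k`, `m`, and a constant `c > ℓ/m`; let `b := m(k-ℓ)+ℓ`. If
`p < n^{-(k-ℓ)-c}`, then with high probability (as `n → ∞` through multiples of
`2b`) the random `k`-graph `H^{(k)}_{n,p}` does not contain `n/(2b)` pairwise
vertex-disjoint `ℓ`-paths each of length `m`. -/
/- ### auxiliary lemmas -/


instance bern.instIsProbabilityMeasure (p : ℝ≥0∞) : IsProbabilityMeasure (bern p) :=
  PMF.toMeasure.isProbabilityMeasure _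

lemma bern_true (p : ℝ≥0∞) : bern p {true} = min p 1 := by
  rw [bern, PMF.toMeasure_apply_singleton _ _ (measurableSet_singleton _)]
  show ((min p 1).toNNReal : ℝ≥0∞) = min p 1
  exact ENNReal.coe_toNNReal (ne_top_of_le_ne_top ENNReal.one_ne_top (min_le_right p 1))

lemma cylinder_measure {ι : Type*} [Fintype ι] [DecidableEq ι] (p : ℝ≥0∞) (T : Finset ι) :
    Measure.pi (fun _ : ι => bern p) {ω | ∀ i ∈ T, ω i = true} =
      (min p 1) ^ T.card := by
  have h : {ω : ι → Bool | ∀ i ∈ T, ω i = true} =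
      Set.pi Set.univ (fun i => if i ∈ T then ({true} : Set Bool) else Set.univ) := by
    ext ω
    simp only [Set.mem_setOf_eq, Set.mem_pi, Set.mem_univ, forall_true_left]
    constructor
    · intro h i
      by_cases hi : i ∈ T <;> simp [hi, h]
    · intro h i hi
      have := h i
      simpa [hi] using this
  rw [h, Measure.pi_pi]
  have : ∀ i : ι, bern p (if i ∈ T then ({true} : Set Bool) else Set.univ) =
      (if i ∈ T then min p 1 else 1) := by
    intro i
    by_cases hi : i ∈ T
    · simp [hi, bern_true]
    · rw [if_neg hi, if_neg hi]; exact measure_univ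
  simp_rw [this, Finset.prod_ite_mem, Finset.univ_inter, Finset.prod_const]

def extFun {α : Type*} {b : ℕ} (hb : 0 < b) (f : Fin b → α) : ℕ → α :=
  fun t => f ⟨t % b, Nat.mod_lt t hb⟩

lemma index_lt {k ℓ m r i : ℕ} (hℓk : ℓ < k) (hm : 1 ≤ m) (hr : r < m) (hi : i < k) :
    r * (k - ℓ) + i < m * (k - ℓ) + ℓ := by
  have h1 : r * (k - ℓ) ≤ (m - 1) * (k - ℓ) := Nat.mul_le_mul_right _ (by omega)
  have h2 : (m - 1) * (k - ℓ) = m * (k - ℓ) - 1 * (k - ℓ) := by rw [Nat.sub_mul]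
  have h3 : 1 * (k - ℓ) ≤ m * (k - ℓ) := Nat.mul_le_mul_right _ hm
  omega

lemma pathEdges_congr {α : Type*} [DecidableEq α] {k ℓ m : ℕ} {v v' : ℕ → α}
    (hℓk : ℓ < k) (hm : 1 ≤ m) (h : ∀ t < m * (k - ℓ) + ℓ, v t = v' t) :
    pathEdges k ℓ m v = pathEdges k ℓ m v' := by
  unfold pathEdges
  apply Finset.image_congr
  intro r hr
  simp only [Finset.coe_range, Set.mem_Iio] at hr
  apply Finset.image_congr
  intro i hi
  simp only [Finset.coe_range, Set.mem_Iio] at hi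
  exact h _ (index_lt hℓk hm hr hi)

section counting

variable {n k ℓ m M b : ℕ} (hbpos : 0 < b) (u : Fin M → Fin b → Fin n)

lemma edge_sub (hℓk : ℓ < k) (hm : 1 ≤ m) (hb : b = m * (k - ℓ) + ℓ)
    (j : Fin M) (r : Fin m) :
    (Finset.range k).image (fun i => extFun hbpos (u j) ((r : ℕ) * (k - ℓ) + i)) ⊆
      (Finset.range b).image (extFun hbpos (u j)) := by
  intro x hx
  obtain ⟨i, hi, rfl⟩ := Finset.mem_image.mp hx
  exact Finset.mem_image.mpr ⟨_, Finset.mem_range.mpr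
    (hb ▸ index_lt hℓk hm r.isLt (Finset.mem_range.mp hi)), rfl⟩

lemma edge_card (hℓk : ℓ < k) (hm : 1 ≤ m) (hb : b = m * (k - ℓ) + ℓ)
    (hinj : ∀ j, Set.InjOn (extFun hbpos (u j)) (Finset.range b))
    (j : Fin M) (r : Fin m) :
    ((Finset.range k).image (fun i => extFun hbpos (u j) ((r : ℕ) * (k - ℓ) + i))).card = k := by
  rw [Finset.card_image_of_injOn, Finset.card_range]
  intro i hi i' hi' h
  simp only [Finset.coe_range, Set.mem_Iio] at hi hi'
  have h1 : (r : ℕ) * (k - ℓ) + i ∈ (↑(Finset.range b) : Set ℕ) := by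
    simp only [Finset.coe_range, Set.mem_Iio]
    exact hb ▸ index_lt hℓk hm r.isLt hi
  have h2 : (r : ℕ) * (k - ℓ) + i' ∈ (↑(Finset.range b) : Set ℕ) := by
    simp only [Finset.coe_range, Set.mem_Iio]
    exact hb ▸ index_lt hℓk hm r.isLt hi'
  have := hinj j h1 h2 h
  omega

lemma F_injective (hℓk : ℓ < k) (hm : 1 ≤ m) (hb : b = m * (k - ℓ) + ℓ)
    (hinj : ∀ j, Set.InjOn (extFun hbpos (u j)) (Finset.range b))
    (hdisj : ∀ j j', j ≠ j' → Disjoint ((Finset.range b).image (extFun hbpos (u j)))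
      ((Finset.range b).image (extFun hbpos (u j')))) :
    Function.Injective (fun jr : Fin M × Fin m =>
      (Finset.range k).image (fun i => extFun hbpos (u jr.1) ((jr.2 : ℕ) * (k - ℓ) + i))) := by
  have hkpos : 0 < k := by omega
  have key : ∀ (j : Fin M) (r r' : Fin m), (r : ℕ) < (r' : ℕ) →
      (Finset.range k).image (fun i => extFun hbpos (u j) ((r : ℕ) * (k - ℓ) + i)) ≠
      (Finset.range k).image (fun i => extFun hbpos (u j) ((r' : ℕ) * (k - ℓ) + i)) := by
    intro j r r' hrr hEq
    have hx : extFun hbpos (u j) ((r' : ℕ) * (k - ℓ) + (k - 1)) ∈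
        (Finset.range k).image (fun i => extFun hbpos (u j) ((r : ℕ) * (k - ℓ) + i)) := by
      rw [hEq]
      exact Finset.mem_image.mpr ⟨k - 1, Finset.mem_range.mpr (by omega), rfl⟩
    obtain ⟨i, hi, heq⟩ := Finset.mem_image.mp hx
    simp only [Finset.mem_range] at hi
    have m1 : (r : ℕ) * (k - ℓ) + i ∈ (↑(Finset.range b) : Set ℕ) := by
      simp only [Finset.coe_range, Set.mem_Iio]
      exact hb ▸ index_lt hℓk hm r.isLt hi
    have m2 : (r' : ℕ) * (k - ℓ) + (k - 1) ∈ (↑(Finset.range b) : Set ℕ) := by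
      simp only [Finset.coe_range, Set.mem_Iio]
      exact hb ▸ index_lt hℓk hm r'.isLt (by omega)
    have hidx := hinj j m1 m2 heq
    have h1 : ((r : ℕ) + 1) * (k - ℓ) ≤ (r' : ℕ) * (k - ℓ) :=
      Nat.mul_le_mul_right _ (by omega)
    have h2 : ((r : ℕ) + 1) * (k - ℓ) = (r : ℕ) * (k - ℓ) + 1 * (k - ℓ) := by
      rw [Nat.add_mul]
    omega
  rintro ⟨j, r⟩ ⟨j', r'⟩ hF
  dsimp at hF
  by_cases hjj : j = j'
  · subst hjj
    rcases lt_trichotomy (r : ℕ) (r' : ℕ) with h | h | h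
    · exact absurd hF (key j r r' h)
    · exact Prod.ext rfl (Fin.ext h)
    · exact absurd hF.symm (key j r' r h)
  · exfalso
    obtain ⟨x, hxmem⟩ : ((Finset.range k).image
        (fun i => extFun hbpos (u j) ((r : ℕ) * (k - ℓ) + i))).Nonempty :=
      (Finset.nonempty_range_iff.mpr (by omega)).image _
    exact (Finset.disjoint_left.mp (hdisj j j' hjj))
      (edge_sub hbpos u hℓk hm hb j r hxmem)
      (edge_sub hbpos u hℓk hm hb j' r' (hF ▸ hxmem))

end counting

theorem no_many_disjoint_paths (k ℓ m : ℕ) (hℓ : 2 ≤ ℓ) (hℓk : ℓ < k)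
    (hm : 1 ≤ m) (c : ℝ) (hc : c > (ℓ : ℝ) / m)
    (p : ℕ → ℝ) (hp : ∀ n : ℕ, 1 ≤ n → 0 ≤ p n ∧
      p n < (n : ℝ) ^ (-((k : ℝ) - (ℓ : ℝ)) - c)) :
    let b : ℕ := m * (k - ℓ) + ℓ
    ∀ ε : ℝ≥0∞, 0 < ε → ∃ N : ℕ, ∀ n ≥ N, 2 * b ∣ n →
      randomHypergraph n k (ENNReal.ofReal (p n))
        {ω | ∃ P : Fin (n / (2 * b)) → Finset (Fin n) × Finset (Finset (Fin n)),
          (∀ j, IsEllPath k ℓ m (P j).1 (P j).2) ∧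
          (∀ j, (P j).2 ⊆ edgeSet ω) ∧
          (∀ j j', j ≠ j' → Disjoint (P j).1 (P j').1)} ≤ ε := by
  classical
  intro b ε hε
  have hbdef : b = m * (k - ℓ) + ℓ := rfl
  have hbpos : 0 < b := by omega
  set e : ℝ := -((k : ℝ) - (ℓ : ℝ)) - c with he
  have hmR : (0 : ℝ) < m := by exact_mod_cast hm
  set δ : ℝ := c * m - ℓ with hδ
  have hδpos : 0 < δ := by
    have := (div_lt_iff₀ hmR).mp hc
    simp only [hδ]; linarith
  -- choose N from the tail bound
  have ht : Filter.Tendsto (fun nn : ℕ => ENNReal.ofReal ((nn : ℝ) ^ (-δ)))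
      Filter.atTop (nhds 0) := by
    have h1 : Filter.Tendsto (fun x : ℝ => x ^ (-δ)) Filter.atTop (nhds 0) :=
      tendsto_rpow_neg_atTop hδpos
    have h2 := h1.comp (tendsto_natCast_atTop_atTop (R := ℝ))
    have h3 := (ENNReal.continuous_ofReal.tendsto 0).comp h2
    rw [ENNReal.ofReal_zero] at h3
    exact h3
  obtain ⟨N0, hN0⟩ := Filter.eventually_atTop.mp (ht.eventually_lt_const hε)
  refine ⟨max N0 1, ?_⟩
  intro n hn hdvd
  have hn1 : 1 ≤ n := le_trans (le_max_right _ _) hn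
  have hnb : 2 * b ≤ n := Nat.le_of_dvd (by omega) hdvd
  set M : ℕ := n / (2 * b) with hMdef
  have hM1 : 1 ≤ M := (Nat.one_le_div_iff (by omega)).mpr hnb
  set q : ℝ≥0∞ := min (ENNReal.ofReal (p n)) 1 with hqdef
  have hq1 : q ≤ 1 := min_le_right _ _
  -- the good set of vertex labellings
  set G : Finset (Fin M → Fin b → Fin n) := Finset.univ.filter
    (fun u => (∀ j, Set.InjOn (extFun hbpos (u j)) (Finset.range b)) ∧
      (∀ j j', j ≠ j' → Disjoint ((Finset.range b).image (extFun hbpos (u j)))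
        ((Finset.range b).image (extFun hbpos (u j'))))) with hGdef
  set E : (Fin M → Fin b → Fin n) → Set ({s : Finset (Fin n) // s.card = k} → Bool) :=
    fun u => {ω | ∀ j, pathEdges k ℓ m (extFun hbpos (u j)) ⊆ edgeSet ω} with hEdef
  -- covering
  have hcover : {ω : {s : Finset (Fin n) // s.card = k} → Bool |
      ∃ P : Fin (n / (2 * b)) → Finset (Fin n) × Finset (Finset (Fin n)),
        (∀ j, IsEllPath k ℓ m (P j).1 (P j).2) ∧
        (∀ j, (P j).2 ⊆ edgeSet ω) ∧
        (∀ j j', j ≠ j' → Disjoint (P j).1 (P j').1)} ⊆ ⋃ u ∈ G, E u := by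
    intro ω hω
    obtain ⟨P, hP1, hP2, hP3⟩ := hω
    choose v hv1 hv2 hv3 using hP1
    set u : Fin M → Fin b → Fin n := fun j i => v j i with hu
    have hagree : ∀ j, ∀ t < b, extFun hbpos (u j) t = v j t := by
      intro j t ht
      show v j ((⟨t % b, Nat.mod_lt t hbpos⟩ : Fin b) : ℕ) = v j t
      simp [Nat.mod_eq_of_lt ht]
    have hinj : ∀ j, Set.InjOn (extFun hbpos (u j)) (Finset.range b) := by
      intro j x hx y hy hxy
      simp only [Finset.coe_range, Set.mem_Iio] at hx hy
      rw [hagree j x hx, hagree j y hy] at hxy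
      exact hv1 j (by simpa [Finset.coe_range, Set.mem_Iio] using hx)
        (by simpa [Finset.coe_range, Set.mem_Iio] using hy) hxy
    have himg : ∀ j, (Finset.range b).image (extFun hbpos (u j)) = (P j).1 := by
      intro j
      rw [hv2 j]
      apply Finset.image_congr
      intro t ht
      simp only [Finset.coe_range, Set.mem_Iio] at ht
      exact hagree j t ht
    have hmemG : u ∈ G := by
      rw [hGdef, Finset.mem_filter]
      refine ⟨Finset.mem_univ _, hinj, ?_⟩
      intro j j' hjj
      rw [himg j, himg j']
      exact hP3 j j' hjj
    have hmemE : ω ∈ E u := by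
      intro j
      have : pathEdges k ℓ m (extFun hbpos (u j)) = (P j).2 := by
        rw [hv3 j]
        exact pathEdges_congr hℓk hm (fun t ht => hagree j t ht)
      rw [this]
      exact hP2 j
    exact Set.mem_biUnion hmemG hmemE
  -- single event bound
  have hsingle : ∀ u ∈ G, randomHypergraph n k (ENNReal.ofReal (p n)) (E u) ≤ q ^ (M * m) := by
    intro u hu
    rw [hGdef, Finset.mem_filter] at hu
    obtain ⟨-, hinj, hdisj⟩ := hu
    set F : Fin M × Fin m → Finset (Fin n) := fun jr =>
      (Finset.range k).image (fun i => extFun hbpos (u jr.1) ((jr.2 : ℕ) * (k - ℓ) + i))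
      with hF
    set T : Finset {s : Finset (Fin n) // s.card = k} :=
      Finset.univ.filter (fun s => s.val ∈ Finset.univ.image F) with hT
    have hcardF : ∀ jr : Fin M × Fin m, (F jr).card = k := fun jr =>
      edge_card hbpos u hℓk hm hbdef hinj jr.1 jr.2
    have hEsub : E u ⊆ {ω | ∀ s ∈ T, ω s = true} := by
      intro ω hω s hs
      rw [hT, Finset.mem_filter] at hs
      obtain ⟨jr, -, hFs⟩ := Finset.mem_image.mp hs.2
      have hmem : s.val ∈ pathEdges k ℓ m (extFun hbpos (u jr.1)) := by
        rw [← hFs]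
        exact Finset.mem_image.mpr ⟨(jr.2 : ℕ), Finset.mem_range.mpr jr.2.isLt, rfl⟩
      have hedge : s.val ∈ edgeSet ω := hω jr.1 hmem
      obtain ⟨s', hs', hval⟩ := Finset.mem_image.mp hedge
      rw [Finset.mem_filter] at hs'
      have := hs'.2
      rwa [Subtype.val_injective hval] at this
    have hTcard : M * m ≤ T.card := by
      have hsub2 : Finset.univ.image F ⊆ T.image Subtype.val := by
        intro x hx
        obtain ⟨jr, -, rfl⟩ := Finset.mem_image.mp hx
        refine Finset.mem_image.mpr ⟨⟨F jr, hcardF jr⟩, ?_, rfl⟩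
        rw [hT, Finset.mem_filter]
        exact ⟨Finset.mem_univ _, Finset.mem_image.mpr ⟨jr, Finset.mem_univ _, rfl⟩⟩
      calc M * m = (Finset.univ.image F).card := by
            rw [Finset.card_image_of_injective _
              (F_injective hbpos u hℓk hm hbdef hinj hdisj)]
            simp
        _ ≤ (T.image Subtype.val).card := Finset.card_le_card hsub2
        _ ≤ T.card := Finset.card_image_le
    calc randomHypergraph n k (ENNReal.ofReal (p n)) (E u)
        ≤ randomHypergraph n k (ENNReal.ofReal (p n)) {ω | ∀ s ∈ T, ω s = true} :=
          measure_mono hEsub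
      _ = q ^ T.card := cylinder_measure _ T
      _ ≤ q ^ (M * m) := pow_le_pow_right_of_le_one' hq1 hTcard
  -- union bound
  have hcardG : (G.card : ℝ≥0∞) ≤ (((n ^ b) ^ M : ℕ) : ℝ≥0∞) := by
    have h1 : G.card ≤ (n ^ b) ^ M := by
      refine le_trans (Finset.card_le_univ G) (le_of_eq ?_)
      simp [Fintype.card_fun]
    exact_mod_cast h1
  have hbound : randomHypergraph n k (ENNReal.ofReal (p n))
      {ω : {s : Finset (Fin n) // s.card = k} → Bool |
      ∃ P : Fin (n / (2 * b)) → Finset (Fin n) × Finset (Finset (Fin n)),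
        (∀ j, IsEllPath k ℓ m (P j).1 (P j).2) ∧
        (∀ j, (P j).2 ⊆ edgeSet ω) ∧
        (∀ j j', j ≠ j' → Disjoint (P j).1 (P j').1)} ≤
      (((n ^ b) ^ M : ℕ) : ℝ≥0∞) * q ^ (M * m) := by
    calc randomHypergraph n k (ENNReal.ofReal (p n)) _
        ≤ randomHypergraph n k (ENNReal.ofReal (p n)) (⋃ u ∈ G, E u) := measure_mono hcover
      _ ≤ ∑ u ∈ G, randomHypergraph n k (ENNReal.ofReal (p n)) (E u) :=
          measure_biUnion_finset_le _ _
      _ ≤ G.card • q ^ (M * m) := Finset.sum_le_card_nsmul _ _ _ hsingle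
      _ = (G.card : ℝ≥0∞) * q ^ (M * m) := nsmul_eq_mul _ _
      _ ≤ (((n ^ b) ^ M : ℕ) : ℝ≥0∞) * q ^ (M * m) := mul_le_mul_left hcardG _
  have hX0 : ((n : ℝ≥0∞)) ≠ 0 := Nat.cast_ne_zero.mpr (by omega)
  have hXtop : ((n : ℝ≥0∞)) ≠ ⊤ := ENNReal.natCast_ne_top n
  have hnR : (0 : ℝ) < n := by exact_mod_cast hn1
  have hqe : q ≤ (n : ℝ≥0∞) ^ e := by
    have h1 : q ≤ ENNReal.ofReal ((n : ℝ) ^ e) :=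
      le_trans (min_le_left _ _) (ENNReal.ofReal_le_ofReal (hp n hn1).2.le)
    rwa [← ENNReal.ofReal_rpow_of_pos hnR, ENNReal.ofReal_natCast] at h1
  have hfinal : (((n ^ b) ^ M : ℕ) : ℝ≥0∞) * q ^ (M * m) ≤
      ENNReal.ofReal ((n : ℝ) ^ (-δ)) := by
    have hcast : (((n ^ b) ^ M : ℕ) : ℝ≥0∞) = (n : ℝ≥0∞) ^ (b * M) := by
      push_cast
      rw [← pow_mul]
    have hqpow : q ^ (M * m) ≤ ((n : ℝ≥0∞) ^ e) ^ (M * m) :=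
      pow_le_pow_left₀ zero_le hqe _
    calc (((n ^ b) ^ M : ℕ) : ℝ≥0∞) * q ^ (M * m)
        ≤ (n : ℝ≥0∞) ^ (b * M) * ((n : ℝ≥0∞) ^ e) ^ (M * m) := by
          rw [hcast]; exact mul_le_mul_right hqpow _
      _ = (n : ℝ≥0∞) ^ (((b * M : ℕ)) : ℝ) * (n : ℝ≥0∞) ^ (e * ((M * m : ℕ) : ℝ)) := by
          rw [← ENNReal.rpow_natCast ((n : ℝ≥0∞)) (b * M),
            ← ENNReal.rpow_natCast ((n : ℝ≥0∞) ^ e) (M * m), ← ENNReal.rpow_mul]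
      _ = (n : ℝ≥0∞) ^ ((((b * M : ℕ)) : ℝ) + e * ((M * m : ℕ) : ℝ)) :=
          (ENNReal.rpow_add _ _ hX0 hXtop).symm
      _ = (n : ℝ≥0∞) ^ (-((M : ℝ) * δ)) := by
          congr 1
          rw [hbdef]
          push_cast [Nat.cast_sub hℓk.le]
          rw [he, hδ]
          ring
      _ ≤ (n : ℝ≥0∞) ^ (-δ) := by
          refine ENNReal.rpow_le_rpow_of_exponent_le (by exact_mod_cast hn1) ?_
          have hM1R : (1 : ℝ) ≤ (M : ℝ) := by exact_mod_cast hM1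
          nlinarith
      _ = ENNReal.ofReal ((n : ℝ) ^ (-δ)) := by
          rw [← ENNReal.ofReal_natCast n, ENNReal.ofReal_rpow_of_pos hnR]
  exact le_trans (hbound.trans hfinal) (hN0 n (le_trans (le_max_left _ _) hn)).le
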